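/- Let u be an invertible complex n×n matrix such that the map K defined by K(x) = (x + u*x*u⁻¹)/2 satisfies K(x²) = K(x)² for all complex n×n matrices x. Then K is the identity map, i.e., u*x*u⁻¹ = x for all x. -/

import Mathlib

open Matrix Polynomial

lemma auxMxM {n : ℕ} (M : Matrix (Fin n) (Fin n) ℂ)
    (h : ∀ x, M * x * M = 0) : M = 0 := by
  ext i j
  have h1 := congrFun (congrFun (h (single j i 1)) i) j
  simp [Matrix.mul_apply, Matrix.single, ite_and, Finset.sum_ite_eq] at h1
  simpa using h1

lemma auxTr {n : ℕ} (m : Matrix (Fin n) (Fin n) ℂ)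
    (h : ∀ y, (m * y).trace = 0) : m = 0 := by
  ext i j
  have h1 := h (single j i 1)
  simp [Matrix.trace, Matrix.diag, Matrix.mul_apply, Matrix.single, ite_and] at h1
  simpa using h1

lemma auxEval {n : ℕ} (M : Matrix (Fin n) (Fin n) ℂ) (t : ℂ) :
    M.charpoly.eval t = (t • (1 : Matrix (Fin n) (Fin n) ℂ) - M).det := by
  rw [Matrix.charpoly, ← Polynomial.coe_evalRingHom, RingHom.map_det]
  congr 1
  ext i j
  by_cases h : i = j
  · subst h; simp [charmatrix_apply, Matrix.one_apply, Matrix.diagonal]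
  · simp [charmatrix_apply, Matrix.one_apply, h, Matrix.diagonal_apply_ne _ h]

lemma auxDescent {n : ℕ} : ∀ (m : ℕ) (N : Matrix (Fin n) (Fin n) ℂ),
    (∀ x, N * N * x + x * (N * N) = N * x * N + N * x * N) → N ^ m = 0 → N = 0 := by
  intro m
  induction m with
  | zero =>
    intro N _ h0
    have h1 : (1 : Matrix (Fin n) (Fin n) ℂ) = 0 := by simpa using h0
    calc N = N * 1 := by rw [mul_one]
    _ = 0 := by rw [h1, mul_zero]
  | succ k ih =>
    intro N h h0
    match k, ih, h0 with
    | 0, _, h0 => simpa using h0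
    | (j+1), ih, h0 =>
      refine ih N h (auxMxM _ (fun x => ?_))
      have hz : N ^ (j+2) = 0 := h0
      have comm : N^j * N = N * N^j := by rw [← pow_succ, pow_succ']
      have z1 : N^j * (N*N) = 0 := by
        rw [show N*N = N^2 from (sq N).symm, ← pow_add]; exact hz
      have z2 : (N*N) * N^j = 0 := by
        rw [show N*N = N^2 from (sq N).symm, ← pow_add,
          show 2+j = j+2 from add_comm 2 j]; exact hz
      have h1 : ∀ y : Matrix (Fin n) (Fin n) ℂ,
          N^(j+1) * y * N^(j+1) = N^j * ((N * y * N) * N^j) := by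
        intro y; rw [pow_succ]; simp only [mul_assoc]; rw [comm]
      have key : N^(j+1)*x*N^(j+1) + N^(j+1)*x*N^(j+1) = 0 := by
        rw [h1 x, ← mul_add, ← add_mul, ← h x]
        calc N^j * ((N*N*x + x*(N*N)) * N^j)
            = (N^j * (N*N)) * x * N^j + N^j * x * ((N*N) * N^j) := by
              simp only [mul_add, add_mul, mul_assoc]
        _ = 0 := by rw [z1, z2]; simp
      have e4 : (2:ℂ) • (N^(j+1)*x*N^(j+1)) = 0 := by
        rw [two_smul]; exact key
      exact (smul_eq_zero.mp e4).resolve_left (by norm_num)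

theorem stmt_0 (n : ℕ) (u : Matrix (Fin n) (Fin n) ℂ) (hu : IsUnit u)
    (hK : ∀ x : Matrix (Fin n) (Fin n) ℂ,
      ((1 : ℂ)/2) • (x ^ 2 + u * x ^ 2 * u⁻¹) =
        (((1 : ℂ)/2) • (x + u * x * u⁻¹)) ^ 2) :
    ∀ x : Matrix (Fin n) (Fin n) ℂ, u * x * u⁻¹ = x := by
  rcases Nat.eq_zero_or_pos n with h0 | hn
  · subst h0
    intro x
    apply Matrix.ext
    intro i
    exact i.elim0
  have hud : IsUnit u.det := (Matrix.isUnit_iff_isUnit_det u).mp hu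
  have hui : u * u⁻¹ = 1 := Matrix.mul_nonsing_inv u hud
  have hiu : u⁻¹ * u = 1 := Matrix.nonsing_inv_mul u hud
  have cancel1 : ∀ Z : Matrix (Fin n) (Fin n) ℂ, u * (u⁻¹ * Z) = Z := fun Z => by
    rw [← mul_assoc, hui, one_mul]
  have cancel2 : ∀ Z : Matrix (Fin n) (Fin n) ℂ, u⁻¹ * (u * Z) = Z := fun Z => by
    rw [← mul_assoc, hiu, one_mul]
  -- Step 1 : (u x u⁻¹ - x)² = 0
  have h2 : ∀ x : Matrix (Fin n) (Fin n) ℂ,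
      (u*x*u⁻¹ - x) * (u*x*u⁻¹ - x) = 0 := by
    intro x
    set a := u * x * u⁻¹ with ha
    have ha2 : a * a = u * x^2 * u⁻¹ := by
      calc a * a = u * (x * ((u⁻¹ * u) * (x * u⁻¹))) := by
            rw [ha]; simp only [mul_assoc]
      _ = u * x^2 * u⁻¹ := by
            rw [hiu, one_mul, pow_two]; simp only [mul_assoc]
    have h := hK x
    rw [← ha2] at h
    have h4 := congrArg (fun M => (4:ℂ) • M) h
    simp only [_root_.smul_pow, smul_smul] at h4
    norm_num at h4
    rw [two_smul, two_smul, ← ha] at h4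
    have expand : (a - x) * (a - x) = (x^2 + x^2 + (a*a + a*a)) - (x+a)^2 := by
      noncomm_ring
    rw [expand, sub_eq_zero]
    exact h4
  -- Step 2 : polarization
  have h3 : ∀ x y : Matrix (Fin n) (Fin n) ℂ,
      (u*x*u⁻¹ - x) * (u*y*u⁻¹ - y) + (u*y*u⁻¹ - y) * (u*x*u⁻¹ - x) = 0 := by
    intro x y
    have hxy := h2 (x + y)
    have hD : u*(x+y)*u⁻¹ - (x+y) = (u*x*u⁻¹ - x) + (u*y*u⁻¹ - y) := by noncomm_ring
    rw [hD] at hxy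
    have e : (u*x*u⁻¹ - x) * (u*y*u⁻¹ - y) + (u*y*u⁻¹ - y) * (u*x*u⁻¹ - x) =
        ((u*x*u⁻¹ - x) + (u*y*u⁻¹ - y)) * ((u*x*u⁻¹ - x) + (u*y*u⁻¹ - y))
        - (u*x*u⁻¹ - x) * (u*x*u⁻¹ - x) - (u*y*u⁻¹ - y) * (u*y*u⁻¹ - y) := by
      noncomm_ring
    rw [e, hxy, h2 x, h2 y]; simp
  -- Step 3 : traces vanish
  have h4 : ∀ x y : Matrix (Fin n) (Fin n) ℂ,
      ((u*x*u⁻¹ - x) * (u*y*u⁻¹ - y)).trace = 0 := by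
    intro x y
    have t := congrArg Matrix.trace (h3 x y)
    rw [Matrix.trace_add, Matrix.trace_mul_comm (u*y*u⁻¹ - y) (u*x*u⁻¹ - x)] at t
    simp only [Matrix.trace_zero] at t
    have : (2:ℂ) • ((u*x*u⁻¹ - x) * (u*y*u⁻¹ - y)).trace = 0 := by
      rw [two_smul]; exact t
    simpa using this
  -- Step 4 : u x u⁻¹ + u⁻¹ x u = 2x
  have h5 : ∀ x : Matrix (Fin n) (Fin n) ℂ, u*x*u⁻¹ + u⁻¹*x*u = x + x := by
    intro x
    have hm : (x + x - u*x*u⁻¹ - u⁻¹*x*u) = 0 := by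
      apply auxTr
      intro y
      have t := h4 x y
      have e1 : (u*x*u⁻¹ - x) * (u*y*u⁻¹ - y) =
          u*x*u⁻¹*(u*y*u⁻¹) - u*x*u⁻¹*y - x*(u*y*u⁻¹) + x*y := by noncomm_ring
      rw [e1] at t
      have c1 : u*x*u⁻¹*(u*y*u⁻¹) = u*(x*y)*u⁻¹ := by
        calc u*x*u⁻¹*(u*y*u⁻¹) = u * (x * ((u⁻¹*u) * (y * u⁻¹))) := by
              simp only [mul_assoc]
        _ = u*(x*y)*u⁻¹ := by rw [hiu, one_mul]; simp only [mul_assoc]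
      rw [c1] at t
      have c2 : (u*(x*y)*u⁻¹).trace = (x*y).trace := by
        rw [Matrix.trace_mul_comm, ← mul_assoc, hiu, one_mul]
      have c3 : (x*(u*y*u⁻¹)).trace = (u⁻¹*x*u*y).trace := by
        rw [show x*(u*y*u⁻¹) = (x*u*y)*u⁻¹ by simp only [mul_assoc],
          Matrix.trace_mul_comm]
        simp only [mul_assoc]
      simp only [Matrix.trace_add, Matrix.trace_sub] at t
      rw [c2, c3] at t
      have e2 : (x + x - u*x*u⁻¹ - u⁻¹*x*u) * y =
          x*y + x*y - u*x*u⁻¹*y - u⁻¹*x*u*y := by noncomm_ring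
      rw [e2]
      simp only [Matrix.trace_add, Matrix.trace_sub]
      linear_combination t
    rw [← sub_eq_zero]
    calc (u*x*u⁻¹ + u⁻¹*x*u) - (x+x) = -(x + x - u*x*u⁻¹ - u⁻¹*x*u) := by abel
    _ = 0 := by rw [hm, neg_zero]
  -- Step 5 : u²x + xu² = 2uxu
  have h6 : ∀ x : Matrix (Fin n) (Fin n) ℂ, u*u*x + x*(u*u) = u*x*u + u*x*u := by
    intro x
    have h5x := congrArg (fun M => u * M * u) (h5 x)
    simp only [mul_add, add_mul, mul_assoc, cancel1, cancel2, hiu, hui, mul_one, one_mul] at h5x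
    simp only [mul_assoc]
    exact h5x
  -- Step 6 : all eigenvalues of u coincide; u - lam•1 is nilpotent
  obtain ⟨lam, hpow⟩ : ∃ lam : ℂ, (u - lam • 1) ^ n = 0 := by
    set p := u.charpoly with hp
    have hmonic : p.Monic := u.charpoly_monic
    have hdeg : p.natDegree = n := by
      rw [hp, Matrix.charpoly_natDegree_eq_dim, Fintype.card_fin]
    have hdpos : 0 < p.degree :=
      Polynomial.natDegree_pos_iff_degree_pos.mp (hdeg ▸ hn)
    obtain ⟨lam, hlam⟩ := Complex.exists_root hdpos
    have hroot : ∀ μ : ℂ, p.IsRoot μ → ∀ ν : ℂ, p.IsRoot ν → μ = ν := by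
      intro μ hμ ν hν
      have hdet1 : (μ • (1 : Matrix (Fin n) (Fin n) ℂ) - u).det = 0 := by
        rw [← auxEval]; exact hμ
      obtain ⟨v, hv0, hv⟩ := (Matrix.exists_mulVec_eq_zero_iff).mpr hdet1
      have hvv : u.mulVec v = μ • v := by
        have := hv
        rw [Matrix.sub_mulVec, sub_eq_zero] at this
        rw [← this, Matrix.smul_mulVec, Matrix.one_mulVec]
      have hdet2 : (ν • (1 : Matrix (Fin n) (Fin n) ℂ) - uᵀ).det = 0 := by
        have e : (ν • (1 : Matrix (Fin n) (Fin n) ℂ) - uᵀ)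
            = (ν • (1 : Matrix (Fin n) (Fin n) ℂ) - u)ᵀ := by
          rw [Matrix.transpose_sub, Matrix.transpose_smul, Matrix.transpose_one]
        rw [e, Matrix.det_transpose, ← auxEval]; exact hν
      obtain ⟨w, hw0, hw⟩ := (Matrix.exists_mulVec_eq_zero_iff).mpr hdet2
      have hww : uᵀ.mulVec w = ν • w := by
        have := hw
        rw [Matrix.sub_mulVec, sub_eq_zero] at this
        rw [← this, Matrix.smul_mulVec, Matrix.one_mulVec]
      set x := Matrix.vecMulVec v w with hx
      have hux : u * x = μ • x := by
        ext i j
        simp only [hx, Matrix.mul_apply, Matrix.vecMulVec_apply, Matrix.smul_apply,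
          smul_eq_mul]
        have e : ∑ k, u i k * (v k * w j) = (∑ k, u i k * v k) * w j := by
          rw [Finset.sum_mul]; apply Finset.sum_congr rfl; intros; ring
        rw [e, show (∑ k, u i k * v k) = u.mulVec v i from rfl, hvv]
        simp [mul_assoc]
      have hxu : x * u = ν • x := by
        ext i j
        simp only [hx, Matrix.mul_apply, Matrix.vecMulVec_apply, Matrix.smul_apply,
          smul_eq_mul]
        have e : ∑ k, v i * w k * u k j = v i * (∑ k, uᵀ j k * w k) := by
          rw [Finset.mul_sum]; apply Finset.sum_congr rfl; intros
          simp [Matrix.transpose_apply]; ring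
        rw [e, show (∑ k, uᵀ j k * w k) = uᵀ.mulVec w j from rfl, hww]
        simp; ring
      have t1 : u*u*x = (μ*μ)•x := by
        rw [mul_assoc, hux, mul_smul_comm, hux, smul_smul]
      have t2 : x*(u*u) = (ν*ν)•x := by
        rw [← mul_assoc, hxu, smul_mul_assoc, hxu, smul_smul]
      have t3 : u*x*u = (μ*ν)•x := by
        rw [hux, smul_mul_assoc, hxu, smul_smul]
      have heq := h6 x
      rw [t1, t2, t3] at heq
      obtain ⟨i, hi⟩ := Function.ne_iff.mp hv0
      obtain ⟨j, hj⟩ := Function.ne_iff.mp hw0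
      have hentry := congrFun (congrFun heq i) j
      simp only [hx, Matrix.add_apply, Matrix.smul_apply, Matrix.vecMulVec_apply,
        smul_eq_mul] at hentry
      have hvwij : v i * w j ≠ 0 := mul_ne_zero (by simpa using hi) (by simpa using hj)
      have hz : (μ - ν)^2 * (v i * w j) = 0 := by linear_combination hentry
      have h0 : (μ - ν)^2 = 0 := by
        rcases mul_eq_zero.mp hz with h' | h'
        · exact h'
        · exact absurd h' hvwij
      exact sub_eq_zero.mp (pow_eq_zero_iff (n := 2) (by norm_num) |>.mp h0)
    refine ⟨lam, ?_⟩
    have hsplits : p.Splits := IsAlgClosed.splits p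
    have hcard : p.roots.card = p.natDegree := (Polynomial.splits_iff_card_roots).mp hsplits
    have hne : p ≠ 0 := hmonic.ne_zero
    have hrepl : p.roots = Multiset.replicate n lam := by
      apply Multiset.eq_replicate.mpr
      refine ⟨by rw [hcard, hdeg], ?_⟩
      intro b hb
      exact hroot b ((Polynomial.mem_roots hne).mp hb) lam hlam
    have hfact : p = (X - C lam)^n := by
      have h' := hsplits.eq_prod_roots_of_monic hmonic
      rwa [hrepl, Multiset.map_replicate, Multiset.prod_replicate] at h'
    have hch := u.aeval_self_charpoly
    rw [← hp, hfact, map_pow, map_sub, aeval_X, aeval_C,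
      show (algebraMap ℂ (Matrix (Fin n) (Fin n) ℂ)) lam = lam • 1 from
        Algebra.algebraMap_eq_smul_one lam] at hch
    exact hch
  -- Step 7 : the nilpotent part satisfies the double-commutator identity
  have hsm1 : ∀ y : Matrix (Fin n) (Fin n) ℂ, (lam•(1:Matrix (Fin n) (Fin n) ℂ)) * y = lam•y :=
    fun y => by rw [smul_mul_assoc, one_mul]
  have hsm2 : ∀ y : Matrix (Fin n) (Fin n) ℂ, y * (lam•(1:Matrix (Fin n) (Fin n) ℂ)) = lam•y :=
    fun y => by rw [mul_smul_comm, mul_one]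
  have hident : ∀ x : Matrix (Fin n) (Fin n) ℂ,
      (u - lam•1)*(u - lam•1)*x + x*((u - lam•1)*(u - lam•1))
        = (u - lam•1)*x*(u - lam•1) + (u - lam•1)*x*(u - lam•1) := by
    intro x
    rw [← sub_eq_zero]
    have e : (u - lam•1)*(u - lam•1)*x + x*((u - lam•1)*(u - lam•1))
        - ((u - lam•1)*x*(u - lam•1) + (u - lam•1)*x*(u - lam•1))
        = u*u*x + x*(u*u) - (u*x*u + u*x*u) := by
      simp only [sub_mul, mul_sub, hsm1, hsm2, smul_sub, smul_smul,
        smul_mul_assoc, mul_smul_comm, one_mul, mul_one]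
      abel
    rw [e, h6 x, sub_self]
  have hN : u - lam•1 = 0 := auxDescent n (u - lam•1) hident hpow
  have huc : u = lam • 1 := by rwa [sub_eq_zero] at hN
  intro x
  have comm : u * x = x * u := by rw [huc, hsm1, hsm2]
  rw [comm, mul_assoc, hui, mul_one]
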